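/- With Γ ⊂ ℝⁿ a nonempty compact C¹-smooth embedded submanifold of dimension k (1 ≤ k ≤ n−1), ρ > 0 satisfying δ(p, r) > r/2 for all p ∈ Γ and 0 < r < 2ρ, and W ⊂ ℝ^{n+1} defined as below: for every point x ∈ Γ the tangent cone of W at (x, 0) satisfies Tan(W, (x,0)) = T_xΓ × [0, +∞), where T_xΓ ⊆ ℝⁿ is the tangent space to Γ at x and ℝ^{n+1} is identified with ℝⁿ × ℝ. -/

import Mathlib

open Metric Set Filter
open scoped RealInnerProductSpace

noncomputable section

/-- `ℝⁿ` as a Euclidean space. -/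
abbrev En (n : ℕ) : Type := EuclideanSpace ℝ (Fin n)

/-- `ℝ^{n+1}` identified with `ℝⁿ × ℝ`, with the Euclidean (L²) norm. -/
abbrev En1 (n : ℕ) : Type := WithLp 2 (En n × ℝ)

/-- The identification of the plain product `ℝⁿ × ℝ` with the L²-product. -/
def emb1 (n : ℕ) : En n × ℝ → En1 n := (WithLp.equiv 2 (En n × ℝ)).symm

/-- First (ℝⁿ) coordinate of a point of `ℝ^{n+1} = ℝⁿ × ℝ`. -/
def fst1 (n : ℕ) (q : En1 n) : En n := ((WithLp.equiv 2 (En n × ℝ)) q).1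

/-- Second (ℝ) coordinate of a point of `ℝ^{n+1} = ℝⁿ × ℝ`. -/
def snd1 (n : ℕ) (q : En1 n) : ℝ := ((WithLp.equiv 2 (En n × ℝ)) q).2

/-- The (Federer) tangent cone of a set `S` at a point `p`: all vectors `w` for which
there are sequences `q i ∈ S` and `c i > 0` with `q i → p` and `c i • (q i − p) → w`. -/
def fTan {E : Type*} [NormedAddCommGroup E] [NormedSpace ℝ E] (S : Set E) (p : E) : Set E :=
  {w | ∃ (q : ℕ → E) (c : ℕ → ℝ), (∀ i, q i ∈ S) ∧ (∀ i, 0 < c i) ∧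
    Filter.Tendsto q Filter.atTop (nhds p) ∧
    Filter.Tendsto (fun i => c i • (q i - p)) Filter.atTop (nhds w)}

/-- A unit normal to `Γ` at `p`: a unit vector orthogonal to the tangent space
(= tangent cone, for a C¹ submanifold) of `Γ` at `p`. -/
def IsUnitNormal {n : ℕ} (Γ : Set (En n)) (p ν : En n) : Prop :=
  ‖ν‖ = 1 ∧ ∀ w ∈ fTan Γ p, inner ℝ ν w = (0 : ℝ)

/-- `δ(p, r) = inf_ν dist(p + rν, Γ)`, the infimum over all unit normals `ν` to `Γ` at `p`. -/
def deltaG {n : ℕ} (Γ : Set (En n)) (p : En n) (r : ℝ) : ℝ :=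
  sInf {d : ℝ | ∃ ν : En n, IsUnitNormal Γ p ν ∧ d = Metric.infDist (p + r • ν) Γ}

/-- `Γ ⊆ ℝⁿ` is a C¹-smooth embedded submanifold of dimension `k`: near each of its points
it is the regular zero level set of a C¹ map into `ℝ^{n-k}`. -/
def IsC1Submanifold {n : ℕ} (k : ℕ) (Γ : Set (En n)) : Prop :=
  ∀ p ∈ Γ, ∃ (V : Set (En n)) (f : En n → EuclideanSpace ℝ (Fin (n - k))),
    IsOpen V ∧ p ∈ V ∧ ContDiffOn ℝ 1 f V ∧
    Γ ∩ V = {y ∈ V | f y = 0} ∧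
    ∀ y ∈ V, Function.Surjective ⇑(fderivWithin ℝ f V y)

/-- The set `W = (ℝⁿ × (0, ρ)) \ ( ⋃_{d(x) > 2ρ} B_{2ρ}((x,0)) ∪ ⋃_{d(x) ≤ 2ρ} B_{d(x)}((x,0)) )`,
where `d(x) = dist(x, Γ)`. -/
def Wset {n : ℕ} (Γ : Set (En n)) (ρ : ℝ) : Set (En1 n) :=
  {q : En1 n | 0 < snd1 n q ∧ snd1 n q < ρ} \
    ((⋃ x ∈ {x : En n | 2 * ρ < Metric.infDist x Γ}, Metric.ball (emb1 n (x, 0)) (2 * ρ)) ∪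
     (⋃ x ∈ {x : En n | Metric.infDist x Γ ≤ 2 * ρ},
        Metric.ball (emb1 n (x, 0)) (Metric.infDist x Γ)))

/- ===== auxiliary lemmas ===== -/

section Aux

lemma zero_mem_fTan {E : Type*} [NormedAddCommGroup E] [NormedSpace ℝ E] {S : Set E} {p : E}
    (hp : p ∈ S) : (0 : E) ∈ fTan S p := by
  refine ⟨fun _ => p, fun _ => 1, fun _ => hp, fun _ => one_pos, tendsto_const_nhds, ?_⟩
  simpa using (tendsto_const_nhds : Tendsto (fun _ : ℕ => (0:E)) atTop (nhds 0))

lemma fTan_shift {E : Type*} [NormedAddCommGroup E] [NormedSpace ℝ E] {S : Set E} {p w : E}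
    (q : ℕ → E) (c : ℕ → ℝ)
    (hq : ∀ᶠ i in atTop, q i ∈ S) (hc : ∀ i, 0 < c i)
    (h1 : Tendsto q atTop (nhds p))
    (h2 : Tendsto (fun i => c i • (q i - p)) atTop (nhds w)) :
    w ∈ fTan S p := by
  obtain ⟨N, hN⟩ := eventually_atTop.1 hq
  refine ⟨fun i => q (i + N), fun i => c (i + N), fun i => hN _ (Nat.le_add_left N i),
    fun i => hc _, ?_, ?_⟩
  · exact (tendsto_add_atTop_iff_nat N).2 h1
  · exact (tendsto_add_atTop_iff_nat N).2 h2

lemma small_of_not_tendsto {E : Type*} [NormedAddCommGroup E] [NormedSpace ℝ E] {p w : E}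
    {q : ℕ → E} {c : ℕ → ℝ}
    (hc : ∀ i, 0 < c i) (h1 : Tendsto q atTop (nhds p))
    (h2 : Tendsto (fun i => c i • (q i - p)) atTop (nhds w))
    (h : ¬ Tendsto c atTop atTop) : w = 0 := by
  rw [Filter.tendsto_atTop] at h
  push_neg at h
  obtain ⟨M, hM⟩ := h
  have hM' : ∃ᶠ i in atTop, c i < M := hM
  have hMpos : 0 < M := by
    obtain ⟨i, hi⟩ := hM'.exists
    exact (hc i).trans hi
  have hnw : Tendsto (fun i => ‖c i • (q i - p)‖) atTop (nhds ‖w‖) := h2.norm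
  have hq0 : Tendsto (fun i => ‖q i - p‖) atTop (nhds 0) := by
    have := (h1.sub_const p).norm
    simpa using this
  have key : ∀ ε > (0:ℝ), ‖w‖ ≤ 0 + ε := by
    intro ε hε
    have e1 : ∀ᶠ i in atTop, ‖w‖ - ε / 2 < ‖c i • (q i - p)‖ :=
      hnw.eventually (eventually_gt_nhds (by linarith))
    have e2 : ∀ᶠ i in atTop, ‖q i - p‖ < ε / (2 * M) :=
      hq0.eventually (eventually_lt_nhds (by positivity))
    obtain ⟨i, hiM, hi1, hi2⟩ := (hM'.and_eventually (e1.and e2)).exists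
    have hni : ‖c i • (q i - p)‖ = c i * ‖q i - p‖ := by
      rw [norm_smul, Real.norm_eq_abs, abs_of_pos (hc i)]
    have hlt : ‖c i • (q i - p)‖ < ε / 2 := by
      rw [hni]
      calc c i * ‖q i - p‖ ≤ M * ‖q i - p‖ :=
            mul_le_mul_of_nonneg_right hiM.le (norm_nonneg _)
        _ < M * (ε / (2 * M)) := (mul_lt_mul_iff_right₀ hMpos).2 hi2
        _ = ε / 2 := by field_simp
    linarith
  have : ‖w‖ ≤ 0 := le_of_forall_pos_le_add (by simpa using key)
  simpa using le_antisymm this (norm_nonneg w)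

lemma ker_subset_fTan {E F : Type*} [NormedAddCommGroup E] [NormedSpace ℝ E]
    [NormedAddCommGroup F] [NormedSpace ℝ F] [FiniteDimensional ℝ E] [FiniteDimensional ℝ F]
    {Γ V : Set E} {f : E → F} {p : E}
    (hV : IsOpen V) (hpV : p ∈ V) (hf : ContDiffOn ℝ 1 f V)
    (hΓV : Γ ∩ V = {y ∈ V | f y = 0}) (hp : p ∈ Γ)
    (hsurj : Function.Surjective ⇑(fderiv ℝ f p))
    {v : E} (hv : v ∈ LinearMap.ker (fderiv ℝ f p).toLinearMap) : v ∈ fTan Γ p := by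
  set D := fderiv ℝ f p with hD
  have hfp : f p = 0 := by
    have : p ∈ Γ ∩ V := ⟨hp, hpV⟩
    rw [hΓV] at this
    exact this.2
  have hstrict : HasStrictFDerivAt f D p :=
    (hf.contDiffAt (hV.mem_nhds hpV)).hasStrictFDerivAt one_ne_zero
  have hrange : LinearMap.range D.toLinearMap = ⊤ := LinearMap.range_eq_top.2 hsurj
  set vk : LinearMap.ker D.toLinearMap := ⟨v, hv⟩ with hvk
  set φ := hstrict.implicitFunction f D hrange with hφ
  set g : ℝ → E := fun t => φ (f p) (t • vk) with hg
  have hsm : HasStrictFDerivAt (fun t : ℝ => t • vk)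
      (ContinuousLinearMap.smulRight (1 : ℝ →L[ℝ] ℝ) vk) 0 :=
    (ContinuousLinearMap.smulRight (1 : ℝ →L[ℝ] ℝ) vk).hasStrictFDerivAt
  have hφd : HasStrictFDerivAt (φ (f p)) (LinearMap.ker D.toLinearMap).subtypeL ((0:ℝ) • vk) := by
    rw [zero_smul]; exact hstrict.to_implicitFunction hrange
  have hgd : HasStrictFDerivAt g
      ((LinearMap.ker D.toLinearMap).subtypeL.comp (ContinuousLinearMap.smulRight (1 : ℝ →L[ℝ] ℝ) vk)) 0 := by
    have := hφd.comp (0:ℝ) (by simpa using hsm)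
    simpa [hg] using this
  have hg0 : g 0 = p := by
    simp only [hg, zero_smul]
    exact hstrict.implicitFunction_apply_image hrange
  have hgderiv : HasDerivAt g v 0 := by
    have := hgd.hasFDerivAt.hasDerivAt
    simpa using this
  set t : ℕ → ℝ := fun i => (1:ℝ) / (i + 1) with ht
  have htpos : ∀ i, 0 < t i := fun i => by positivity
  have ht0 : Tendsto t atTop (nhds 0) := tendsto_one_div_add_atTop_nhds_zero_nat
  have ht0' : Tendsto t atTop (nhdsWithin 0 {(0:ℝ)}ᶜ) :=
    tendsto_nhdsWithin_of_tendsto_nhds_of_eventually_within _ ht0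
      (Eventually.of_forall fun i => (htpos i).ne')
  have hgc : ContinuousAt g 0 := hgd.continuousAt
  have hq1 : Tendsto (fun i => g (t i)) atTop (nhds p) := by
    have := hgc.tendsto.comp ht0
    rwa [hg0] at this
  have hslope : Tendsto (fun i => (t i)⁻¹ • (g (t i) - p)) atTop (nhds v) := by
    have h := hasDerivAt_iff_tendsto_slope.1 hgderiv
    have := h.comp ht0'
    refine this.congr fun i => ?_
    simp [slope_def_module, hg0]
  have hmemV : ∀ᶠ i in atTop, g (t i) ∈ V := by
    have : ∀ᶠ z in nhds (0:ℝ), g z ∈ V := hgc (hV.mem_nhds (hg0 ▸ hpV))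
    exact ht0.eventually this
  have hmemf : ∀ᶠ i in atTop, f (g (t i)) = 0 := by
    have hmap := hstrict.map_implicitFunction_eq hrange
    have htend : Tendsto (fun z : ℝ => ((f p, z • vk) : F × LinearMap.ker D.toLinearMap)) (nhds 0)
        (nhds (f p, 0)) := by
      refine Tendsto.prodMk_nhds tendsto_const_nhds ?_
      have : Tendsto (fun z : ℝ => z • vk) (nhds (0:ℝ)) (nhds ((0:ℝ) • vk)) :=
        (continuous_id.smul continuous_const).tendsto 0
      simpa using this
    have : ∀ᶠ z : ℝ in nhds 0, f (φ (f p) (z • vk)) = f p := htend.eventually hmap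
    have := ht0.eventually this
    simpa [hg, hfp] using this
  have hmemΓ : ∀ᶠ i in atTop, g (t i) ∈ Γ := by
    filter_upwards [hmemV, hmemf] with i h1 h2
    have : g (t i) ∈ Γ ∩ V := by rw [hΓV]; exact ⟨h1, h2⟩
    exact this.1
  exact fTan_shift _ _ hmemΓ (fun i => by positivity) hq1 hslope

lemma tangency_estimate {E F : Type*} [NormedAddCommGroup E] [InnerProductSpace ℝ E]
    [NormedAddCommGroup F] [NormedSpace ℝ F] [FiniteDimensional ℝ E] [FiniteDimensional ℝ F]
    {Γ V : Set E} {f : E → F} {p e : E}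
    (hV : IsOpen V) (hpV : p ∈ V) (hf : ContDiffOn ℝ 1 f V)
    (hΓV : Γ ∩ V = {y ∈ V | f y = 0}) (hp : p ∈ Γ)
    (he : e ∈ (LinearMap.ker (fderiv ℝ f p).toLinearMap)ᗮ)
    {ε : ℝ} (hε : 0 < ε) :
    ∃ δ₀ > 0, ∀ q ∈ Γ, ‖q - p‖ < δ₀ → |⟪e, q - p⟫| ≤ ‖e‖ * (ε * ‖q - p‖) := by
  set D := fderiv ℝ f p with hD
  set K := LinearMap.ker D.toLinearMap with hK
  have hfp : f p = 0 := by
    have : p ∈ Γ ∩ V := ⟨hp, hpV⟩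
    rw [hΓV] at this
    exact this.2
  set L : Kᗮ →ₗ[ℝ] F := D.toLinearMap.comp Kᗮ.subtype with hL
  have hLker : LinearMap.ker L = ⊥ := by
    rw [LinearMap.ker_eq_bot']
    intro u hu
    have h1 : (u : E) ∈ K ⊓ Kᗮ := ⟨hu, u.2⟩
    rw [Submodule.inf_orthogonal_eq_bot] at h1
    exact Subtype.ext h1
  obtain ⟨C, hC0, hC⟩ := L.exists_antilipschitzWith hLker
  have hCpos : (0:ℝ) < C := hC0
  have hd : HasFDerivAt f D p :=
    ((hf.contDiffAt (hV.mem_nhds hpV)).differentiableAt one_ne_zero).hasFDerivAt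
  have hev : ∀ᶠ q in nhds p, ‖f q - f p - D (q - p)‖ ≤ (ε / C) * ‖q - p‖ ∧ q ∈ V := by
    have h1 := hd.isLittleO.def (by positivity : (0:ℝ) < ε / C)
    exact h1.and (eventually_of_mem (hV.mem_nhds hpV) fun q hq => hq)
  obtain ⟨δ₀, hδ₀, hball⟩ := Metric.eventually_nhds_iff.1 hev
  refine ⟨δ₀, hδ₀, fun q hq hqδ => ?_⟩
  have hdist : dist q p < δ₀ := by rwa [dist_eq_norm]
  obtain ⟨hbound, hqV⟩ := hball hdist
  have hfq : f q = 0 := by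
    have : q ∈ Γ ∩ V := ⟨hq, hqV⟩
    rw [hΓV] at this
    exact this.2
  have hDv : ‖D (q - p)‖ ≤ (ε / C) * ‖q - p‖ := by
    have h4 : f q - f p - D (q - p) = -(D (q - p)) := by rw [hfq, hfp]; abel
    rw [h4, norm_neg] at hbound
    exact hbound
  set v : E := q - p with hv
  set u : E := v - (K.orthogonalProjectionOnto v : E) with hu
  have humem : u ∈ Kᗮ := K.sub_starProjection_mem_orthogonal v
  have hDu : D u = D v := by
    have : D ((K.orthogonalProjectionOnto v : E)) = 0 :=
      LinearMap.mem_ker.1 (SetLike.coe_mem (K.orthogonalProjectionOnto v))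
    rw [hu, map_sub, this, sub_zero]
  have hunorm : ‖u‖ ≤ ε * ‖v‖ := by
    have h1 : ‖(⟨u, humem⟩ : Kᗮ)‖ ≤ C * ‖L ⟨u, humem⟩‖ :=
      hC.le_mul_norm (map_zero L) (⟨u, humem⟩ : Kᗮ)
    have h2 : L ⟨u, humem⟩ = D v := by simp [hL, hDu]
    have h3 : ‖(⟨u, humem⟩ : Kᗮ)‖ = ‖u‖ := rfl
    rw [h2, h3] at h1
    calc ‖u‖ ≤ C * ‖D v‖ := h1
      _ ≤ C * ((ε / C) * ‖v‖) := mul_le_mul_of_nonneg_left hDv (le_of_lt hCpos)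
      _ = ε * ‖v‖ := by field_simp
  have hinner : ⟪e, v⟫ = ⟪e, u⟫ := by
    have hπ : ⟪(K.orthogonalProjectionOnto v : E), e⟫ = 0 :=
      (Submodule.mem_orthogonal K e).1 he _ (SetLike.coe_mem _)
    have hπ' : ⟪e, ((K.orthogonalProjectionOnto v : E))⟫ = 0 := by rwa [real_inner_comm]
    have h5 : ⟪e, u⟫ = ⟪e, v⟫ - ⟪e, ((K.orthogonalProjectionOnto v : E))⟫ :=
      inner_sub_right e v _
    rw [h5, hπ', sub_zero]
  calc |⟪e, v⟫| = |⟪e, u⟫| := by rw [hinner]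
    _ ≤ ‖e‖ * ‖u‖ := abs_real_inner_le_norm e u
    _ ≤ ‖e‖ * (ε * ‖v‖) := mul_le_mul_of_nonneg_left hunorm (norm_nonneg e)

end Aux

section En1Aux

variable (n : ℕ)

lemma continuous_fst1 : Continuous (fst1 n) :=
  continuous_fst.comp (WithLp.prod_continuous_ofLp 2 (En n) ℝ)

lemma continuous_snd1 : Continuous (snd1 n) :=
  continuous_snd.comp (WithLp.prod_continuous_ofLp 2 (En n) ℝ)

lemma continuous_emb1 : Continuous (emb1 n) :=
  WithLp.prod_continuous_toLp 2 (En n) ℝ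

lemma emb1_eta (Q : En1 n) : emb1 n (fst1 n Q, snd1 n Q) = Q := rfl

lemma dist_emb1 (a a' : En n) (b b' : ℝ) :
    dist (emb1 n (a, b)) (emb1 n (a', b')) = Real.sqrt (dist a a' ^ 2 + dist b b' ^ 2) :=
  WithLp.prod_dist_eq_of_L2 _ _

lemma dist_emb1_sq (a a' : En n) (b b' : ℝ) :
    dist (emb1 n (a, b)) (emb1 n (a', b')) ^ 2 = dist a a' ^ 2 + dist b b' ^ 2 := by
  rw [dist_emb1]
  exact Real.sq_sqrt (by positivity)

lemma mem_Wset_of_mem {Γ : Set (En n)} {ρ : ℝ} {q : En n} (hq : q ∈ Γ)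
    {ε : ℝ} (h0 : 0 < ε) (hρ' : ε < ρ) :
    emb1 n (q, ε) ∈ Wset Γ ρ := by
  constructor
  · exact ⟨h0, hρ'⟩
  · intro hm
    rcases hm with hm | hm
    · simp only [Set.mem_iUnion, Metric.mem_ball, Set.mem_setOf_eq, exists_prop] at hm
      obtain ⟨x, hx, hball⟩ := hm
      rw [dist_emb1] at hball
      have h1 : Metric.infDist x Γ ≤ dist x q := Metric.infDist_le_dist_of_mem hq
      have h2 : dist q x ≤ Real.sqrt (dist q x ^ 2 + dist ε 0 ^ 2) := by
        have h3 := Real.sqrt_le_sqrt (show dist q x ^ 2 ≤ dist q x ^ 2 + dist ε 0 ^ 2 by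
          nlinarith [sq_nonneg (dist ε 0)])
        rwa [Real.sqrt_sq dist_nonneg] at h3
      rw [dist_comm x q] at h1
      linarith
    · simp only [Set.mem_iUnion, Metric.mem_ball, Set.mem_setOf_eq, exists_prop] at hm
      obtain ⟨x, hx, hball⟩ := hm
      rw [dist_emb1] at hball
      have h1 : Metric.infDist x Γ ≤ dist x q := Metric.infDist_le_dist_of_mem hq
      have h2 : Real.sqrt (dist q x ^ 2 + dist ε 0 ^ 2) > dist q x := by
        have hd0 : dist ε 0 = ε := by rw [Real.dist_eq, sub_zero, abs_of_pos h0]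
        have h3 := Real.sqrt_lt_sqrt (sq_nonneg (dist q x))
          (show dist q x ^ 2 < dist q x ^ 2 + dist ε 0 ^ 2 by rw [hd0]; nlinarith)
        rwa [Real.sqrt_sq dist_nonneg] at h3
      rw [dist_comm x q] at h1
      linarith

end En1Aux

set_option maxHeartbeats 2000000 in
/-- with `Γ ⊂ ℝⁿ` a nonempty compact C¹ embedded `k`-submanifold
(`1 ≤ k ≤ n−1`), `ρ > 0` with `δ(p, r) > r/2` for all `p ∈ Γ` and `0 < r < 2ρ`, and `W` as
defined above: for every `x ∈ Γ`, `Tan(W, (x,0)) = T_xΓ × [0, +∞)`, where the tangent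
space `T_xΓ` is the tangent cone of `Γ` at `x`. -/
theorem statement6
    (n k : ℕ) (hk : 1 ≤ k) (hkn : k ≤ n - 1)
    (Γ : Set (En n)) (hne : Γ.Nonempty) (hcomp : IsCompact Γ)
    (hman : IsC1Submanifold k Γ)
    (ρ : ℝ) (hρ : 0 < ρ)
    (hδ : ∀ p ∈ Γ, ∀ r : ℝ, 0 < r → r < 2 * ρ → r / 2 < deltaG Γ p r) :
    ∀ x ∈ Γ, fTan (Wset Γ ρ) (emb1 n (x, 0)) =
      {q : En1 n | fst1 n q ∈ fTan Γ x ∧ 0 ≤ snd1 n q} := by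
  intro x₀ hx₀
  obtain ⟨V, f, hV, hxV, hfC, hΓV, hsurjW⟩ := hman x₀ hx₀
  have hDsurj : Function.Surjective ⇑(fderiv ℝ f x₀) := by
    rw [← fderivWithin_of_isOpen hV hxV]
    exact hsurjW x₀ hxV
  set D := fderiv ℝ f x₀ with hDdef
  set K := LinearMap.ker D.toLinearMap with hKdef
  ext Q
  simp only [Set.mem_setOf_eq]
  constructor
  · intro hQ
    obtain ⟨P, c, hPW, hc, hPlim, hblow⟩ := hQ
    set w := fst1 n Q with hwdef
    set s := snd1 n Q with hsdef
    set y : ℕ → En n := fun i => fst1 n (P i) with hydef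
    set t : ℕ → ℝ := fun i => snd1 n (P i) with htdef
    have hy : Tendsto y atTop (nhds x₀) :=
      ((continuous_fst1 n).tendsto (emb1 n (x₀, 0))).comp hPlim
    have hX : Tendsto (fun i => c i • (y i - x₀)) atTop (nhds w) := by
      have h0 := ((continuous_fst1 n).tendsto Q).comp hblow
      exact h0.congr fun i => rfl
    have ht : Tendsto (fun i => c i * t i) atTop (nhds s) := by
      have h0 := ((continuous_snd1 n).tendsto Q).comp hblow
      refine h0.congr fun i => ?_
      show c i * (t i - 0) = c i * t i
      ring
    have htpos : ∀ i, 0 < t i := fun i => (hPW i).1.1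
    have hs0 : 0 ≤ s :=
      ge_of_tendsto ht (Eventually.of_forall fun i => (mul_pos (hc i) (htpos i)).le)
    refine ⟨?_, hs0⟩
    by_cases hw0 : w = 0
    · rw [hw0]; exact zero_mem_fTan hx₀
    have hcT : Tendsto c atTop atTop := by
      by_contra h
      exact hw0 (small_of_not_tendsto hc hy hX h)
    have claim : ∀ e : En n, e ∈ Kᗮ → ‖e‖ = 1 → ⟪e, w⟫ ≤ 0 := by
      intro e heK henorm
      have h2A : ∀ A : ℝ, 0 < A → 2 * A * ⟪e, w⟫ ≤ ‖w‖ ^ 2 + s ^ 2 := by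
        intro A hA
        have hAe : ∀ ε : ℝ, 0 < ε → ε < 1 →
            A ^ 2 * (1 - ε ^ 2) ≤ ‖w - A • e‖ ^ 2 + s ^ 2 := by
          intro ε hε hε1
          obtain ⟨δ₀, hδ₀, htang⟩ := tangency_estimate hV hxV hfC hΓV hx₀ heK hε
          have hev : ∀ᶠ i in atTop,
              A ^ 2 * (1 - ε ^ 2) ≤ ‖c i • (y i - x₀) - A • e‖ ^ 2 + (c i * t i) ^ 2 := by
            filter_upwards [hcT.eventually_ge_atTop (2 * A / δ₀),
              hcT.eventually_ge_atTop (A / (2 * ρ)), hcT.eventually_gt_atTop 0] with i h1 h2 h3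
            have hδA : 2 * A ≤ c i * δ₀ := by
              have := (div_le_iff₀ hδ₀).1 h1
              linarith
            have hρA : A ≤ c i * (2 * ρ) := by
              have := (div_le_iff₀ (by positivity : (0:ℝ) < 2 * ρ)).1 h2
              linarith
            set r := A / c i with hrdef
            have hrpos : 0 < r := div_pos hA h3
            have hrδ : r ≤ δ₀ / 2 := by
              rw [hrdef, div_le_div_iff₀ h3 (by norm_num : (0:ℝ) < 2)]
              linarith
            have hr2ρ : r ≤ 2 * ρ := by
              rw [hrdef, div_le_iff₀ h3]
              linarith [mul_comm (c i) (2 * ρ)]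
            set x := x₀ + r • e with hxdef
            have hxx0 : dist x x₀ = r := by
              rw [dist_eq_norm]
              simp only [hxdef, add_sub_cancel_left]
              rw [norm_smul, henorm, Real.norm_eq_abs, abs_of_pos hrpos, mul_one]
            have hdx_le : Metric.infDist x Γ ≤ r := by
              calc Metric.infDist x Γ ≤ dist x x₀ := Metric.infDist_le_dist_of_mem hx₀
                _ = r := hxx0
            have hsqrt_le_r : Real.sqrt (r ^ 2 * (1 - ε ^ 2)) ≤ r := by
              calc Real.sqrt (r ^ 2 * (1 - ε ^ 2)) ≤ Real.sqrt (r ^ 2) :=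
                    Real.sqrt_le_sqrt (by nlinarith)
                _ = r := Real.sqrt_sq hrpos.le
            have hdx_ge : Real.sqrt (r ^ 2 * (1 - ε ^ 2)) ≤ Metric.infDist x Γ := by
              rw [← not_lt, Metric.infDist_lt_iff hne]
              push_neg
              intro q hq
              rcases lt_or_ge ‖q - x₀‖ δ₀ with hlt | hge
              · have hiq := htang q hq hlt
                rw [henorm, one_mul] at hiq
                have hxq : dist x q ^ 2 = r ^ 2 - 2 * r * ⟪e, q - x₀⟫ + ‖q - x₀‖ ^ 2 := by
                  rw [dist_eq_norm]
                  have hxq2 : x - q = r • e - (q - x₀) := by rw [hxdef]; abel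
                  rw [hxq2, norm_sub_sq_real, norm_smul, real_inner_smul_left, henorm,
                    Real.norm_eq_abs, abs_of_pos hrpos]
                  ring
                have hb := abs_le.1 hiq
                have h2 : r ^ 2 * (1 - ε ^ 2) ≤ dist x q ^ 2 := by
                  rw [hxq]
                  nlinarith [sq_nonneg (ε * r - ‖q - x₀‖), hb.1, hb.2, hrpos.le,
                    norm_nonneg (q - x₀)]
                calc Real.sqrt (r ^ 2 * (1 - ε ^ 2)) ≤ Real.sqrt (dist x q ^ 2) :=
                      Real.sqrt_le_sqrt h2
                  _ = dist x q := Real.sqrt_sq dist_nonneg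
              · have htri : dist q x₀ ≤ dist q x + dist x x₀ := dist_triangle q x x₀
                have hqx0 : dist q x₀ = ‖q - x₀‖ := by rw [dist_eq_norm]
                have hd1 : δ₀ / 2 ≤ dist x q := by
                  rw [dist_comm x q]
                  rw [hqx0, hxx0] at htri
                  linarith
                linarith
            have hnb : Metric.infDist x Γ ≤ dist (P i) (emb1 n (x, 0)) := by
              by_contra hlt
              push_neg at hlt
              have hxmem : x ∈ {x : En n | Metric.infDist x Γ ≤ 2 * ρ} := by
                simp only [Set.mem_setOf_eq]
                linarith
              exact (hPW i).2 (Or.inr (Set.mem_biUnion hxmem (Metric.mem_ball.2 hlt)))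
            have hPeta : P i = emb1 n (y i, t i) := (emb1_eta n (P i)).symm
            have hsq : r ^ 2 * (1 - ε ^ 2) ≤ dist (y i) x ^ 2 + t i ^ 2 := by
              have h0 : Real.sqrt (r ^ 2 * (1 - ε ^ 2)) ≤ dist (P i) (emb1 n (x, 0)) :=
                le_trans hdx_ge hnb
              have h1 : dist (P i) (emb1 n (x, 0)) ^ 2 = dist (y i) x ^ 2 + dist (t i) 0 ^ 2 := by
                rw [hPeta]; exact dist_emb1_sq n _ _ _ _
              have h2 : r ^ 2 * (1 - ε ^ 2) ≤ dist (P i) (emb1 n (x, 0)) ^ 2 := by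
                have hε2 : (0:ℝ) ≤ 1 - ε ^ 2 := by nlinarith
                have h3 := Real.sq_sqrt (mul_nonneg (sq_nonneg r) hε2)
                have h5 := mul_self_le_mul_self (Real.sqrt_nonneg (r ^ 2 * (1 - ε ^ 2))) h0
                nlinarith [h3, h5]
              have h4 : dist (t i) 0 ^ 2 = t i ^ 2 := by
                rw [Real.dist_eq, sub_zero, sq_abs]
              rw [h1, h4] at h2
              exact h2
            have hA_eq : c i * r = A := by
              rw [hrdef]; field_simp
            have hnorm : c i * dist (y i) x = ‖c i • (y i - x₀) - A • e‖ := by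
              rw [dist_eq_norm]
              have h6 : y i - x = (y i - x₀) - r • e := by rw [hxdef]; abel
              rw [h6, ← norm_smul_of_nonneg h3.le, smul_sub, smul_smul, hA_eq]
            calc A ^ 2 * (1 - ε ^ 2) = (c i) ^ 2 * (r ^ 2 * (1 - ε ^ 2)) := by
                  rw [← hA_eq]; ring
              _ ≤ (c i) ^ 2 * (dist (y i) x ^ 2 + t i ^ 2) :=
                  mul_le_mul_of_nonneg_left hsq (by positivity)
              _ = (c i * dist (y i) x) ^ 2 + (c i * t i) ^ 2 := by ring
              _ = ‖c i • (y i - x₀) - A • e‖ ^ 2 + (c i * t i) ^ 2 := by rw [hnorm]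
          have hR : Tendsto (fun i => ‖c i • (y i - x₀) - A • e‖ ^ 2 + (c i * t i) ^ 2) atTop
              (nhds (‖w - A • e‖ ^ 2 + s ^ 2)) :=
            (((hX.sub_const (A • e)).norm.pow 2).add (ht.pow 2))
          exact ge_of_tendsto hR hev
        have hA2 : A ^ 2 ≤ ‖w - A • e‖ ^ 2 + s ^ 2 := by
          refine le_of_forall_pos_le_add fun η hη => ?_
          set ε := min (1/2 : ℝ) (η / (A ^ 2 + η)) with hεdef
          have hε0 : 0 < ε := lt_min (by norm_num) (by positivity)
          have hε1 : ε < 1 := lt_of_le_of_lt (min_le_left _ _) (by norm_num)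
          have hmain := hAe ε hε0 hε1
          have hεb : A ^ 2 * ε ^ 2 ≤ η := by
            have h1 : ε ≤ η / (A ^ 2 + η) := min_le_right _ _
            have h3 : ε ^ 2 ≤ ε := by nlinarith
            have h4 : A ^ 2 * ε ≤ A ^ 2 * (η / (A ^ 2 + η)) :=
              mul_le_mul_of_nonneg_left h1 (sq_nonneg A)
            have h5 : A ^ 2 * (η / (A ^ 2 + η)) ≤ η := by
              rw [mul_div_assoc', div_le_iff₀ (by positivity)]
              nlinarith
            nlinarith [sq_nonneg A]
          nlinarith
        have hexp : ‖w - A • e‖ ^ 2 = ‖w‖ ^ 2 - 2 * A * ⟪e, w⟫ + A ^ 2 := by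
          rw [norm_sub_sq_real, real_inner_smul_right, norm_smul, henorm, Real.norm_eq_abs,
            mul_one, sq_abs, real_inner_comm w e]
          ring
        rw [hexp] at hA2
        linarith
      by_contra hpos
      push_neg at hpos
      obtain ⟨μ, hμdef⟩ : ∃ μ : ℝ, μ = ⟪e, w⟫ := ⟨_, rfl⟩
      rw [← hμdef] at hpos
      have h2A' : ∀ A : ℝ, 0 < A → 2 * A * μ ≤ ‖w‖ ^ 2 + s ^ 2 := by
        intro A hA
        rw [hμdef]
        exact h2A A hA
      set B := (‖w‖ ^ 2 + s ^ 2 + 1) / (2 * μ) with hB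
      have hBpos : 0 < B := by positivity
      have hcontra := h2A' B hBpos
      have heq : 2 * B * μ = ‖w‖ ^ 2 + s ^ 2 + 1 := by
        rw [hB]
        field_simp
      linarith
    have hwK : w ∈ K := by
      have horth : ∀ u ∈ Kᗮ, ⟪u, w⟫ = 0 := by
        intro u hu
        rcases eq_or_ne u 0 with h | h
        · simp [h]
        · set e := (‖u‖⁻¹ : ℝ) • u with he
          have heK : e ∈ Kᗮ := Submodule.smul_mem _ _ hu
          have hen : ‖e‖ = 1 := norm_smul_inv_norm (𝕜 := ℝ) h
          have h1 := claim e heK hen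
          have h2 := claim (-e) (Submodule.neg_mem _ heK) (by rw [norm_neg]; exact hen)
          have h3 : ⟪-e, w⟫ = -⟪e, w⟫ := inner_neg_left e w
          rw [h3] at h2
          have h4 : ⟪e, w⟫ = 0 := le_antisymm h1 (by linarith)
          have h5 : ⟪e, w⟫ = ‖u‖⁻¹ * ⟪u, w⟫ := by
            rw [he, real_inner_smul_left]
          have hne' : (‖u‖ : ℝ) ≠ 0 := norm_ne_zero_iff.2 h
          have := h5 ▸ h4
          field_simp at this
          simpa using this
      have hww : w ∈ Kᗮᗮ := (Submodule.mem_orthogonal Kᗮ w).2 horth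
      haveI : CompleteSpace K := FiniteDimensional.complete ℝ K
      rwa [Submodule.orthogonal_orthogonal] at hww
    exact ker_subset_fTan hV hxV hfC hΓV hx₀ hDsurj hwK
  · rintro ⟨hw, hs⟩
    set w := fst1 n Q with hwdef
    set s := snd1 n Q with hsdef
    have hQ : Q = emb1 n (w, s) := rfl
    obtain ⟨q, a, hqΓ, ha, hq1, hq2⟩ := hw
    have hone : Tendsto (fun i : ℕ => (1:ℝ) / (i + 1)) atTop (nhds 0) :=
      tendsto_one_div_add_atTop_nhds_zero_nat
    rcases eq_or_lt_of_le hs with hs0 | hspos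
    · -- s = 0
      set ε : ℕ → ℝ := fun i => min (ρ/2) (1/((i+1) * (a i + 1))) with hεdef
      have hdenpos : ∀ i : ℕ, (0:ℝ) < ((i:ℝ)+1) * (a i + 1) := fun i =>
        mul_pos (by positivity) (by linarith [ha i])
      have hεpos : ∀ i, 0 < ε i := fun i =>
        lt_min (by positivity) (div_pos one_pos (hdenpos i))
      have hερ : ∀ i, ε i < ρ := fun i => lt_of_le_of_lt (min_le_left _ _) (by linarith)
      have hεle : ∀ i, ε i ≤ 1/(i+1) := by
        intro i
        refine le_trans (min_le_right _ _) ?_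
        rw [div_le_div_iff₀ (hdenpos i) (by positivity)]
        nlinarith [(ha i).le, (show (0:ℝ) < (i:ℝ) + 1 by positivity)]
      have hε0 : Tendsto ε atTop (nhds 0) :=
        tendsto_of_tendsto_of_tendsto_of_le_of_le tendsto_const_nhds hone
          (fun i => (hεpos i).le) hεle
      have haε : Tendsto (fun i => a i * (ε i - 0)) atTop (nhds 0) := by
        have hub : ∀ i, a i * (ε i - 0) ≤ 1/(i+1) := by
          intro i
          have h1 : ε i ≤ 1/((i+1) * (a i + 1)) := min_le_right _ _
          have h2 : a i * ε i ≤ a i * (1/((i+1) * (a i + 1))) :=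
            mul_le_mul_of_nonneg_left h1 (ha i).le
          have h3 : a i * (1/((i+1) * (a i + 1))) ≤ 1/(i+1) := by
            rw [mul_one_div, div_le_div_iff₀ (hdenpos i) (by positivity)]
            nlinarith [(ha i).le, (show (0:ℝ) < (i:ℝ) + 1 by positivity)]
          rw [sub_zero]
          linarith
        exact tendsto_of_tendsto_of_tendsto_of_le_of_le tendsto_const_nhds hone
          (fun i => by nlinarith [(ha i).le, (hεpos i).le]) hub
      refine ⟨fun i => emb1 n (q i, ε i), a,
        fun i => mem_Wset_of_mem n (hqΓ i) (hεpos i) (hερ i), ha, ?_, ?_⟩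
      · have hprod : Tendsto (fun i => (q i, ε i)) atTop (nhds (x₀, 0)) :=
          hq1.prodMk_nhds hε0
        exact ((continuous_emb1 n).tendsto _).comp hprod
      · have hprod : Tendsto (fun i => (a i • (q i - x₀), a i * (ε i - 0))) atTop
            (nhds (w, s)) := by
          rw [← hs0]
          exact hq2.prodMk_nhds haε
        have hcomp := ((continuous_emb1 n).tendsto _).comp hprod
        rw [hQ]
        exact hcomp.congr fun i => rfl
    · -- s > 0
      by_cases hw0 : w = 0
      · set ε : ℕ → ℝ := fun i => min (ρ/2) (1/(i+1)) with hεdef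
        have hεpos : ∀ i, 0 < ε i := fun i => lt_min (by positivity) (by positivity)
        have hερ : ∀ i, ε i < ρ := fun i => lt_of_le_of_lt (min_le_left _ _) (by linarith)
        have hε0 : Tendsto ε atTop (nhds 0) :=
          tendsto_of_tendsto_of_tendsto_of_le_of_le tendsto_const_nhds hone
            (fun i => (hεpos i).le) (fun i => min_le_right _ _)
        refine ⟨fun i => emb1 n (x₀, ε i), fun i => s / ε i,
          fun i => mem_Wset_of_mem n hx₀ (hεpos i) (hερ i),
          fun i => div_pos hspos (hεpos i), ?_, ?_⟩
        · have hprod : Tendsto (fun i => ((x₀ : En n), ε i)) atTop (nhds (x₀, 0)) :=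
            tendsto_const_nhds.prodMk_nhds hε0
          exact ((continuous_emb1 n).tendsto _).comp hprod
        · have hconst : ∀ i, (s / ε i) • (emb1 n (x₀, ε i) - emb1 n (x₀, 0)) = Q := by
            intro i
            rw [hQ, hw0]
            show emb1 n ((s / ε i) • (x₀ - x₀), (s / ε i) * (ε i - 0)) = emb1 n (0, s)
            congr 1
            refine Prod.ext ?_ ?_
            · simp
            · show (s / ε i) * (ε i - 0) = s
              rw [sub_zero]
              exact div_mul_cancel₀ s (hεpos i).ne'
          exact tendsto_const_nhds.congr fun i => (hconst i).symm
      · have haT : Tendsto a atTop atTop := by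
          by_contra h
          exact hw0 (small_of_not_tendsto ha hq1 hq2 h)
        set ε : ℕ → ℝ := fun i => min (ρ/2) (s / a i) with hεdef
        have hεpos : ∀ i, 0 < ε i := fun i => lt_min (by positivity) (div_pos hspos (ha i))
        have hερ : ∀ i, ε i < ρ := fun i => lt_of_le_of_lt (min_le_left _ _) (by linarith)
        have hsd : Tendsto (fun i => s / a i) atTop (nhds 0) :=
          tendsto_const_nhds.div_atTop haT
        have hε0 : Tendsto ε atTop (nhds 0) :=
          tendsto_of_tendsto_of_tendsto_of_le_of_le tendsto_const_nhds hsd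
            (fun i => (hεpos i).le) (fun i => min_le_right _ _)
        have haε : Tendsto (fun i => a i * (ε i - 0)) atTop (nhds s) := by
          have hev : ∀ᶠ i in atTop, a i * (ε i - 0) = s := by
            filter_upwards [haT.eventually_ge_atTop (2 * s / ρ)] with i hi
            have h2s : 2 * s ≤ a i * ρ := by
              have := (div_le_iff₀ hρ).1 hi
              linarith
            have h3 : s / a i ≤ ρ/2 := by
              rw [div_le_div_iff₀ (ha i) (by norm_num : (0:ℝ) < 2)]
              linarith
            have hmin : ε i = s / a i := min_eq_right h3
            rw [hmin, sub_zero, mul_comm, div_mul_cancel₀ s (ha i).ne']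
          exact Tendsto.congr' (hev.mono fun i hi => hi.symm) tendsto_const_nhds
        refine ⟨fun i => emb1 n (q i, ε i), a,
          fun i => mem_Wset_of_mem n (hqΓ i) (hεpos i) (hερ i), ha, ?_, ?_⟩
        · have hprod : Tendsto (fun i => (q i, ε i)) atTop (nhds (x₀, 0)) :=
            hq1.prodMk_nhds hε0
          exact ((continuous_emb1 n).tendsto _).comp hprod
        · have hprod : Tendsto (fun i => (a i • (q i - x₀), a i * (ε i - 0))) atTop
              (nhds (w, s)) := hq2.prodMk_nhds haε
          have hcomp := ((continuous_emb1 n).tendsto _).comp hprod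
          rw [hQ]
          exact hcomp.congr fun i => rfl
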